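/- KL divergence quadratic bound: under the exponential family transition model P_W(s'|s,a) = q(s') exp(⟨ψ(s'), Wφ(s,a)⟩ - Z_{sa}(W)), if the conditional covariance of ψ(s') satisfies Cov_{sa}^W[ψ(s')] ⪯ κI for all parameters W and all (s,a), then for any W, W': D_KL(P_W(·|s,a) ‖ P_{W'}(·|s,a)) ≤ (κ/2) ‖vec(W) - vec(W')‖²_{Φ_{sa} Φ_{sa}ᵀ}, where Φ_{sa} is the matrix whose rows are (E_{ij} φ(s,a))ᵀ over all basis matrices E_{ij}. -/

import Mathlib

open MeasureTheory Matrix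

/-- Vectorization of a matrix: `vec M (i,j) = M i j`. -/
def vec {a b : ℕ} (M : Matrix (Fin a) (Fin b) ℝ) : Fin a × Fin b → ℝ :=
  fun p => M p.1 p.2

open Real

lemma abs_le_exp_add (x : ℝ) : |x| ≤ 4 * (exp x + exp (-x)) := by
  have h1 : |x| + 1 ≤ exp |x| := Real.add_one_le_exp _
  have h2 : exp |x| ≤ exp x + exp (-x) := by
    rcases abs_cases x with ⟨h, _⟩ | ⟨h, _⟩ <;> rw [h] <;>
      [linarith [Real.exp_pos (-x)]; linarith [Real.exp_pos x]]
  nlinarith [Real.exp_pos x, Real.exp_pos (-x)]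

lemma sq_le_exp_add (x : ℝ) : x ^ 2 ≤ 4 * (exp x + exp (-x)) := by
  have h0 : |x| / 2 ≤ exp (|x| / 2) := by
    have := Real.add_one_le_exp (|x| / 2); linarith
  have h1 : x ^ 2 ≤ 4 * exp |x| := by
    have h := mul_self_le_mul_self (by positivity) h0
    rw [← Real.exp_add] at h
    have hx : |x| / 2 + |x| / 2 = |x| := by ring
    rw [hx] at h
    nlinarith [abs_mul_abs_self x]
  have h2 : exp |x| ≤ exp x + exp (-x) := by
    rcases abs_cases x with ⟨h, _⟩ | ⟨h, _⟩ <;> rw [h] <;>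
      [linarith [Real.exp_pos (-x)]; linarith [Real.exp_pos x]]
  nlinarith

lemma exp_range_bound {lo hi r c a : ℝ} (h1 : lo ≤ r) (h2 : r ≤ hi) :
    exp (a + r * c) ≤ exp (a + hi * c) + exp (a + lo * c) := by
  rcases le_or_gt 0 c with hc | hc
  · have : a + r * c ≤ a + hi * c := by nlinarith
    linarith [Real.exp_le_exp.2 this, Real.exp_pos (a + lo * c)]
  · have : a + r * c ≤ a + lo * c := by nlinarith
    linarith [Real.exp_le_exp.2 this, Real.exp_pos (a + hi * c)]

lemma integrable_mul_exp {α : Type*} [MeasurableSpace α] {μ : Measure α} {a c : α → ℝ}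
    (hc : AEMeasurable c μ)
    (ha : ∀ t : ℝ, Integrable (fun s => exp (a s + t * c s)) μ)
    {g : α → ℝ} (hg : AEMeasurable g μ)
    (hgb : ∀ s, |g s| ≤ 4 * (exp (c s) + exp (- c s))) (t : ℝ) :
    Integrable (fun s => g s * exp (a s + t * c s)) μ := by
  have hmeas : AEStronglyMeasurable (fun s => g s * exp (a s + t * c s)) μ :=
    (hg.mul (ha t).aemeasurable).aestronglyMeasurable
  refine (((ha (t+1)).add (ha (t-1))).const_mul 4).mono hmeas (Filter.Eventually.of_forall ?_)
  intro s
  simp only [Pi.add_apply, Real.norm_eq_abs]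
  have he : (0:ℝ) < exp (a s + t * c s) := Real.exp_pos _
  have h3 : (exp (c s) + exp (-c s)) * exp (a s + t * c s)
      = exp (a s + (t+1) * c s) + exp (a s + (t-1) * c s) := by
    rw [add_mul, ← Real.exp_add, ← Real.exp_add]; ring_nf
  calc |g s * exp (a s + t * c s)| = |g s| * exp (a s + t * c s) := by
        rw [abs_mul, abs_of_pos he]
    _ ≤ 4 * ((exp (c s) + exp (-c s)) * exp (a s + t * c s)) := by
        have := hgb s; nlinarith
    _ = 4 * (exp (a s + (t+1) * c s) + exp (a s + (t-1) * c s)) := by rw [h3]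
    _ ≤ |4 * (exp (a s + (t+1) * c s) + exp (a s + (t-1) * c s))| := le_abs_self _

lemma key {α : Type*} [MeasurableSpace α] {μ : Measure α} {a c : α → ℝ}
    (hc : AEMeasurable c μ)
    (hInt : ∀ t : ℝ, Integrable (fun s => exp (a s + t * c s)) μ)
    {K : ℝ}
    (hpos : ∀ t : ℝ, 0 < ∫ s, exp (a s + t * c s) ∂μ)
    (hvar : ∀ t : ℝ,
      (∫ s, c s ^ 2 * exp (a s + t * c s) ∂μ) / (∫ s, exp (a s + t * c s) ∂μ)
        - ((∫ s, c s * exp (a s + t * c s) ∂μ) / (∫ s, exp (a s + t * c s) ∂μ)) ^ 2 ≤ K) :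
    Real.log (∫ s, exp (a s + (1:ℝ) * c s) ∂μ) - Real.log (∫ s, exp (a s + (0:ℝ) * c s) ∂μ)
      - (∫ s, c s * exp (a s + (0:ℝ) * c s) ∂μ) / (∫ s, exp (a s + (0:ℝ) * c s) ∂μ)
      ≤ K / 2 := by
  set F : ℝ → ℝ := fun t => ∫ s, exp (a s + t * c s) ∂μ with hF
  set F1 : ℝ → ℝ := fun t => ∫ s, c s * exp (a s + t * c s) ∂μ with hF1
  set F2 : ℝ → ℝ := fun t => ∫ s, c s ^ 2 * exp (a s + t * c s) ∂μ with hF2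
  -- pointwise derivative facts
  have hderiv1 : ∀ (s : α) (x : ℝ),
      HasDerivAt (fun x => exp (a s + x * c s)) (c s * exp (a s + x * c s)) x := by
    intro s x
    have h := (((hasDerivAt_id x).mul_const (c s)).const_add (a s)).exp
    simpa [mul_comm] using h
  have hderiv2 : ∀ (s : α) (x : ℝ),
      HasDerivAt (fun x => c s * exp (a s + x * c s)) (c s ^ 2 * exp (a s + x * c s)) x := by
    intro s x
    have h := (hderiv1 s x).const_mul (c s)
    rw [show c s ^ 2 * exp (a s + x * c s) = c s * (c s * exp (a s + x * c s)) by ring]; exact h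
  have hcmeas : ∀ t : ℝ, AEStronglyMeasurable (fun s => c s * exp (a s + t * c s)) μ :=
    fun t => (hc.mul (hInt t).aemeasurable).aestronglyMeasurable
  have hboundint : ∀ t : ℝ, Integrable
      (fun s => 8 * (exp (a s + (t+2) * c s) + exp (a s + (t-2) * c s))) μ :=
    fun t => ((hInt (t+2)).add (hInt (t-2))).const_mul 8
  -- the uniform bound on the ball
  have hball : ∀ (t : ℝ) (s : α) (g : α → ℝ), (|g s| ≤ 4 * (exp (c s) + exp (-c s))) →
      ∀ x ∈ Metric.ball t (1:ℝ), ‖g s * exp (a s + x * c s)‖ ≤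
        8 * (exp (a s + (t+2) * c s) + exp (a s + (t-2) * c s)) := by
    intro t s g hg x hx
    rw [Real.norm_eq_abs, abs_mul, abs_of_pos (Real.exp_pos _)]
    have hx' : |x - t| < 1 := by simpa [Real.dist_eq] using hx
    have h1 : exp (a s + (x+1) * c s) ≤ exp (a s + (t+2) * c s) + exp (a s + (t-2) * c s) :=
      exp_range_bound (by cases abs_lt.1 hx'; linarith) (by cases abs_lt.1 hx'; linarith)
    have h2 : exp (a s + (x-1) * c s) ≤ exp (a s + (t+2) * c s) + exp (a s + (t-2) * c s) :=
      exp_range_bound (by cases abs_lt.1 hx'; linarith) (by cases abs_lt.1 hx'; linarith)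
    have h3 : (exp (c s) + exp (-c s)) * exp (a s + x * c s)
        = exp (a s + (x+1) * c s) + exp (a s + (x-1) * c s) := by
      rw [add_mul, ← Real.exp_add, ← Real.exp_add]; ring_nf
    have h4 : |g s| * exp (a s + x * c s) ≤
        4 * ((exp (c s) + exp (-c s)) * exp (a s + x * c s)) := by
      nlinarith [Real.exp_pos (a s + x * c s)]
    rw [h3] at h4; linarith
  -- first derivative of F
  have hFd : ∀ t : ℝ, HasDerivAt F (F1 t) t := by
    intro t
    have := hasDerivAt_integral_of_dominated_loc_of_deriv_le (μ := μ)
      (F := fun x s => exp (a s + x * c s)) (F' := fun x s => c s * exp (a s + x * c s))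
      (x₀ := t) (s := Metric.ball t 1)
      (bound := fun s => 8 * (exp (a s + (t+2) * c s) + exp (a s + (t-2) * c s)))
      (Metric.ball_mem_nhds t one_pos)
      (Filter.Eventually.of_forall fun x => (hInt x).aestronglyMeasurable)
      (hInt t) (hcmeas t)
      (Filter.Eventually.of_forall fun s => hball t s c (abs_le_exp_add _))
      (hboundint t)
      (Filter.Eventually.of_forall fun s x _ => hderiv1 s x)
    exact this.2
  -- derivative of F1
  have hF1d : ∀ t : ℝ, HasDerivAt F1 (F2 t) t := by
    intro t
    have := hasDerivAt_integral_of_dominated_loc_of_deriv_le (μ := μ)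
      (F := fun x s => c s * exp (a s + x * c s)) (F' := fun x s => c s ^ 2 * exp (a s + x * c s))
      (x₀ := t) (s := Metric.ball t 1)
      (bound := fun s => 8 * (exp (a s + (t+2) * c s) + exp (a s + (t-2) * c s)))
      (Metric.ball_mem_nhds t one_pos)
      (Filter.Eventually.of_forall fun x => hcmeas x)
      (integrable_mul_exp hc hInt hc (fun s => abs_le_exp_add _) t)
      ((((hc.pow_const 2).mul (hInt t).aemeasurable).aestronglyMeasurable))
      (Filter.Eventually.of_forall fun s => by
        have hb : |c s ^ 2| ≤ 4 * (exp (c s) + exp (-c s)) := by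
          rw [abs_of_nonneg (sq_nonneg _)]; exact sq_le_exp_add _
        exact hball t s (fun s => c s ^ 2) hb)
      (hboundint t)
      (Filter.Eventually.of_forall fun s x _ => hderiv2 s x)
    exact this.2
  -- log partition derivative
  set G : ℝ → ℝ := fun t => F1 t / F t with hG
  have hGd : ∀ t : ℝ, HasDerivAt G ((F2 t * F t - F1 t * F1 t) / (F t) ^ 2) t :=
    fun t => (hF1d t).div (hFd t) (ne_of_gt (hpos t))
  have hD : ∀ t : ℝ, (F2 t * F t - F1 t * F1 t) / (F t) ^ 2 ≤ K := by
    intro t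
    have h := hvar t
    have hFt := hpos t
    have : (F2 t * F t - F1 t * F1 t) / (F t) ^ 2 = F2 t / F t - (F1 t / F t) ^ 2 := by
      field_simp
    rw [this]; exact h
  -- step 1 : G t ≤ K * t + G 0 for t ≥ 0
  have hQd : ∀ t : ℝ, HasDerivAt (fun t => K * t + G 0 - G t)
      (K - (F2 t * F t - F1 t * F1 t) / (F t) ^ 2) t := by
    intro t
    have h1 : HasDerivAt (fun t : ℝ => K * t + G 0) K t := by
      simpa using ((hasDerivAt_id t).const_mul K).add_const (G 0)
    exact h1.sub (hGd t)
  have hQmono : Monotone (fun t => K * t + G 0 - G t) := by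
    apply monotone_of_deriv_nonneg
    · exact fun t => (hQd t).differentiableAt
    · intro t
      rw [(hQd t).deriv]
      linarith [hD t]
  have hQ : ∀ t : ℝ, 0 ≤ t → G t ≤ K * t + G 0 := by
    intro t ht
    have := hQmono ht
    simp only [mul_zero, zero_add] at this
    linarith
  -- step 2 : Taylor bound
  set H : ℝ → ℝ := fun t => K * t ^ 2 / 2 + G 0 * t - Real.log (F t) with hH
  have hHd : ∀ t : ℝ, HasDerivAt H (K * t + G 0 - G t) t := by
    intro t
    have h1 : HasDerivAt (fun t : ℝ => K * t ^ 2 / 2 + G 0 * t) (K * t + G 0) t := by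
      have ha' : HasDerivAt (fun t : ℝ => K * t ^ 2 / 2) (K * t) t := by
        have h : HasDerivAt (fun x : ℝ => K * x ^ 2 / 2) (K * (↑2 * t ^ 1) / 2) t :=
          ((hasDerivAt_pow 2 t).const_mul K).div_const 2
        convert h using 1
        push_cast; ring
      have hb' : HasDerivAt (fun t : ℝ => G 0 * t) (G 0) t := by
        simpa using (hasDerivAt_id t).const_mul (G 0)
      exact ha'.add hb'
    have h2 : HasDerivAt (fun t => Real.log (F t)) (G t) t :=
      (hFd t).log (ne_of_gt (hpos t))
    exact h1.sub h2
  have hHmono : MonotoneOn H (Set.Ici (0:ℝ)) := by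
    apply monotoneOn_of_deriv_nonneg (convex_Ici 0)
    · exact (fun t _ => ((hHd t).differentiableAt.continuousAt.continuousWithinAt))
    · exact fun t _ => ((hHd t).differentiableAt.differentiableWithinAt)
    · intro t ht
      rw [interior_Ici] at ht
      rw [(hHd t).deriv]
      linarith [hQ t (le_of_lt ht)]
  have hfin := hHmono (Set.mem_Ici.2 le_rfl) (Set.mem_Ici.2 zero_le_one) zero_le_one
  simp only [hH] at hfin
  have hG0 : G 0 = F1 0 / F 0 := rfl
  have : K * (0:ℝ) ^ 2 / 2 + G 0 * 0 - Real.log (F 0) ≤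
      K * (1:ℝ) ^ 2 / 2 + G 0 * 1 - Real.log (F 1) := hfin
  simp only [hG0] at this
  have hc1 : Real.log (F 1) - Real.log (F 0) - F1 0 / F 0 ≤ K / 2 := by nlinarith
  exact hc1

/-- KL divergence quadratic bound for exponential family transitions: if the conditional
covariance of ψ(s') is bounded by κI for all parameters, then
D_KL(P_W ‖ P_{W'}) ≤ (κ/2) ‖vec W - vec W'‖²_{Φ Φᵀ}, where Φ is the matrix whose rows are
(E_{ij} φ)ᵀ over all basis matrices E_{ij}, i.e. Φ (i,j) k = δ_{ik} φ_j. -/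
theorem stmt_14 {ds dψ dφ : ℕ}
    (q : (Fin ds → ℝ) → ℝ) (ψ : (Fin ds → ℝ) → (Fin dψ → ℝ)) (φv : Fin dφ → ℝ)
    (Z : Matrix (Fin dψ) (Fin dφ) ℝ → ℝ)
    (P : Matrix (Fin dψ) (Fin dφ) ℝ → (Fin ds → ℝ) → ℝ)
    (hq : ∀ s', 0 < q s')
    (hZ : ∀ V, Z V = Real.log (∫ s', q s' * Real.exp (ψ s' ⬝ᵥ (V *ᵥ φv))))
    (hP : ∀ V s', P V s' = q s' * Real.exp (ψ s' ⬝ᵥ (V *ᵥ φv) - Z V))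
    (hprob : ∀ V, ∫ s', P V s' = 1)
    (κ : ℝ) (hκ : 0 ≤ κ)
    (hcov : ∀ (V : Matrix (Fin dψ) (Fin dφ) ℝ) (u : Fin dψ → ℝ),
      (∫ s', (u ⬝ᵥ ψ s') ^ 2 * P V s') - (∫ s', (u ⬝ᵥ ψ s') * P V s') ^ 2 ≤
        κ * ∑ i, u i ^ 2)
    (Φm : Matrix (Fin dψ × Fin dφ) (Fin dψ) ℝ)
    (hΦm : ∀ (p : Fin dψ × Fin dφ) (k : Fin dψ), Φm p k = if k = p.1 then φv p.2 else 0)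
    (W W' : Matrix (Fin dψ) (Fin dφ) ℝ)
    (hKLint : Integrable fun s' => P W s' * Real.log (P W s' / P W' s')) :
    ∫ s', P W s' * Real.log (P W s' / P W' s') ≤
      (κ / 2) * ((_root_.vec W - _root_.vec W') ⬝ᵥ ((Φm * Φmᵀ) *ᵥ (_root_.vec W - _root_.vec W'))) := by
  set Δ : Matrix (Fin dψ) (Fin dφ) ℝ := W' - W with hΔ
  set u : Fin dψ → ℝ := Δ *ᵥ φv with hu
  set A : (Fin ds → ℝ) → ℝ := fun s' => Real.log (q s') + ψ s' ⬝ᵥ (W *ᵥ φv) with hA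
  set C : (Fin ds → ℝ) → ℝ := fun s' => ψ s' ⬝ᵥ (Δ *ᵥ φv) with hC
  set Vt : ℝ → Matrix (Fin dψ) (Fin dφ) ℝ := fun t => W + t • Δ with hVt
  have hV0 : Vt 0 = W := by simp [hVt]
  have hV1 : Vt 1 = W' := by simp [hVt, hΔ]
  have hVdot : ∀ (t : ℝ) (s' : Fin ds → ℝ),
      ψ s' ⬝ᵥ ((Vt t) *ᵥ φv) = ψ s' ⬝ᵥ (W *ᵥ φv) + t * C s' := by
    intro t s'
    simp [hVt, Matrix.add_mulVec, Matrix.smul_mulVec, dotProduct_add,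
      dotProduct_smul, smul_eq_mul, hC]
  have hqe : ∀ (t : ℝ) (s' : Fin ds → ℝ),
      q s' * Real.exp (ψ s' ⬝ᵥ ((Vt t) *ᵥ φv)) = Real.exp (A s' + t * C s') := by
    intro t s'
    rw [hVdot t s', show A s' + t * C s' = Real.log (q s') +
      (ψ s' ⬝ᵥ (W *ᵥ φv) + t * C s') by simp [hA]; ring,
      Real.exp_add (Real.log (q s')), Real.exp_log (hq s')]
  have hPint : ∀ V, Integrable (fun s' => P V s') := by
    intro V
    by_contra h
    have h1 := hprob V
    rw [integral_undef h] at h1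
    exact one_ne_zero h1.symm
  have hPeq : ∀ (t : ℝ) (s' : Fin ds → ℝ),
      P (Vt t) s' = Real.exp (A s' + t * C s') * Real.exp (- Z (Vt t)) := by
    intro t s'
    rw [hP, sub_eq_add_neg, Real.exp_add, ← mul_assoc, hqe t s']
  have hfun : ∀ t : ℝ, (fun s' => P (Vt t) s' * Real.exp (Z (Vt t)))
      = fun s' => Real.exp (A s' + t * C s') := by
    intro t
    funext s'
    rw [hPeq t s', mul_assoc, ← Real.exp_add]
    simp
  have hInt : ∀ t : ℝ, Integrable (fun s' => Real.exp (A s' + t * C s')) := by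
    intro t
    have := (hPint (Vt t)).mul_const (Real.exp (Z (Vt t)))
    rwa [hfun t] at this
  have hFt : ∀ t : ℝ, (∫ s', Real.exp (A s' + t * C s')) = Real.exp (Z (Vt t)) := by
    intro t
    rw [← hfun t]
    rw [integral_mul_const (Real.exp (Z (Vt t))) (fun s' => P (Vt t) s'), hprob, one_mul]
  have hpos : ∀ t : ℝ, 0 < ∫ s', Real.exp (A s' + t * C s') := by
    intro t; rw [hFt t]; exact Real.exp_pos _
  have hc : AEMeasurable C := by
    have h1 : AEMeasurable (fun s' => Real.log (Real.exp (A s' + 1 * C s'))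
        - Real.log (Real.exp (A s' + 0 * C s'))) :=
      (Real.measurable_log.comp_aemeasurable (hInt 1).aemeasurable).sub
        (Real.measurable_log.comp_aemeasurable (hInt 0).aemeasurable)
    refine h1.congr (Filter.Eventually.of_forall fun s' => ?_)
    simp [Real.log_exp]
  have hCint : ∀ t : ℝ, Integrable (fun s' => C s' * Real.exp (A s' + t * C s')) :=
    fun t => integrable_mul_exp hc hInt hc (fun s => abs_le_exp_add _) t
  have hm1 : ∀ t : ℝ, (∫ s', C s' * P (Vt t) s')
      = (∫ s', C s' * Real.exp (A s' + t * C s')) / (∫ s', Real.exp (A s' + t * C s')) := by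
    intro t
    have h1 : (fun s' => C s' * P (Vt t) s')
        = fun s' => (C s' * Real.exp (A s' + t * C s')) * Real.exp (- Z (Vt t)) := by
      funext s'; rw [hPeq t s']; ring
    rw [h1, integral_mul_const (Real.exp (- Z (Vt t)))
      (fun s' => C s' * Real.exp (A s' + t * C s')), hFt t, Real.exp_neg, div_eq_mul_inv]
  have hm2 : ∀ t : ℝ, (∫ s', C s' ^ 2 * P (Vt t) s')
      = (∫ s', C s' ^ 2 * Real.exp (A s' + t * C s')) / (∫ s', Real.exp (A s' + t * C s')) := by
    intro t
    have h1 : (fun s' => C s' ^ 2 * P (Vt t) s')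
        = fun s' => (C s' ^ 2 * Real.exp (A s' + t * C s')) * Real.exp (- Z (Vt t)) := by
      funext s'; rw [hPeq t s']; ring
    rw [h1, integral_mul_const (Real.exp (- Z (Vt t)))
      (fun s' => C s' ^ 2 * Real.exp (A s' + t * C s')), hFt t, Real.exp_neg, div_eq_mul_inv]
  have huC : ∀ s', u ⬝ᵥ ψ s' = C s' := by
    intro s'
    rw [hu, hC]
    exact dotProduct_comm _ _
  set K : ℝ := κ * ∑ i, u i ^ 2 with hK
  have hvar : ∀ t : ℝ,
      (∫ s', C s' ^ 2 * Real.exp (A s' + t * C s')) / (∫ s', Real.exp (A s' + t * C s'))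
      - ((∫ s', C s' * Real.exp (A s' + t * C s')) / (∫ s', Real.exp (A s' + t * C s'))) ^ 2
        ≤ K := by
    intro t
    have h := hcov (Vt t) u
    simp only [huC] at h
    rw [hm1 t, hm2 t] at h
    exact h
  have hKey := key hc hInt hpos hvar
  -- LHS identification
  have hZlog : ∀ t : ℝ, Z (Vt t) = Real.log (∫ s', Real.exp (A s' + t * C s')) := by
    intro t; rw [hFt t, Real.log_exp]
  have hx' : ∀ s', ψ s' ⬝ᵥ (W' *ᵥ φv) = ψ s' ⬝ᵥ (W *ᵥ φv) + C s' := by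
    intro s'
    have h := hVdot 1 s'
    rw [hV1] at h
    simpa using h
  have hptw : ∀ s', P W s' * Real.log (P W s' / P W' s')
      = (Z W' - Z W) * P W s' - C s' * P W s' := by
    intro s'
    have hlog : Real.log (P W s' / P W' s') = (Z W' - Z W) - C s' := by
      rw [hP W s', hP W' s', hx' s']
      rw [mul_div_mul_left _ _ (ne_of_gt (hq s')), ← Real.exp_sub, Real.log_exp]
      ring
    rw [hlog]; ring
  have hIc : Integrable (fun s' => C s' * P W s') := by
    have h1 : (fun s' => C s' * P W s')
        = fun s' => (C s' * Real.exp (A s' + (0:ℝ) * C s')) * Real.exp (- Z W) := by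
      funext s'
      have h := hPeq 0 s'
      rw [hV0] at h
      rw [h]; ring
    rw [h1]; exact (hCint 0).mul_const _
  have hLHS : (∫ s', P W s' * Real.log (P W s' / P W' s'))
      = Real.log (∫ s', Real.exp (A s' + (1:ℝ) * C s'))
        - Real.log (∫ s', Real.exp (A s' + (0:ℝ) * C s'))
        - (∫ s', C s' * Real.exp (A s' + (0:ℝ) * C s'))
          / (∫ s', Real.exp (A s' + (0:ℝ) * C s')) := by
    have h1 : (∫ s', P W s' * Real.log (P W s' / P W' s'))
        = ∫ s', ((Z W' - Z W) * P W s' - C s' * P W s') := by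
      congr 1; funext s'; exact hptw s'
    rw [h1, integral_sub ((hPint W).const_mul _) hIc,
        integral_const_mul (Z W' - Z W) (fun s' => P W s'), hprob W, mul_one]
    have h2 : (∫ s', C s' * P W s')
        = (∫ s', C s' * Real.exp (A s' + (0:ℝ) * C s'))
          / (∫ s', Real.exp (A s' + (0:ℝ) * C s')) := by
      have h := hm1 0
      rw [hV0] at h
      exact h
    rw [h2]
    have h3 : Z W' = Real.log (∫ s', Real.exp (A s' + (1:ℝ) * C s')) := by
      have h := hZlog 1; rw [hV1] at h; exact h
    have h4 : Z W = Real.log (∫ s', Real.exp (A s' + (0:ℝ) * C s')) := by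
      have h := hZlog 0; rw [hV0] at h; exact h
    rw [h3, h4]
  -- RHS identification
  have hRHS : (_root_.vec W - _root_.vec W') ⬝ᵥ ((Φm * Φmᵀ) *ᵥ (_root_.vec W - _root_.vec W')) = ∑ i, u i ^ 2 := by
    set x : Fin dψ × Fin dφ → ℝ := _root_.vec W - _root_.vec W' with hx
    rw [← Matrix.mulVec_mulVec x Φm Φmᵀ, Matrix.dotProduct_mulVec]
    have h2 : Matrix.vecMul x Φm = Φmᵀ *ᵥ x := by
      rw [← Matrix.transpose_transpose Φm]
      exact Matrix.vecMul_transpose Φmᵀ x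
    rw [h2]
    have h3 : ∀ k, (Φmᵀ *ᵥ x) k = - u k := by
      intro k
      rw [hu, hΔ]
      simp only [Matrix.mulVec, dotProduct, Matrix.transpose_apply, hΦm, hx,
        Pi.sub_apply, Matrix.sub_apply, _root_.vec, Fintype.sum_prod_type, ite_mul, zero_mul,
        Finset.sum_ite_eq, Finset.mem_univ, if_true]
      rw [Finset.sum_eq_single k]
      · rw [← Finset.sum_neg_distrib]
        exact Finset.sum_congr rfl fun j _ => by
          rw [if_pos rfl]; ring
      · intro b _ hb
        simp [Ne.symm hb]
      · intro hk
        exact absurd (Finset.mem_univ k) hk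
    rw [show Φmᵀ *ᵥ x = fun k => - u k from funext h3]
    simp only [dotProduct]
    exact Finset.sum_congr rfl fun k _ => by ring
  calc ∫ s', P W s' * Real.log (P W s' / P W' s')
      = Real.log (∫ s', Real.exp (A s' + (1:ℝ) * C s'))
        - Real.log (∫ s', Real.exp (A s' + (0:ℝ) * C s'))
        - (∫ s', C s' * Real.exp (A s' + (0:ℝ) * C s'))
          / (∫ s', Real.exp (A s' + (0:ℝ) * C s')) := hLHS
    _ ≤ K / 2 := hKey
    _ = (κ / 2) * ((_root_.vec W - _root_.vec W') ⬝ᵥ ((Φm * Φmᵀ) *ᵥ (_root_.vec W - _root_.vec W'))) := by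
        rw [hRHS, hK]; ring
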